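/- Let n ≥ 3 and let G be a subgroup of the symmetric group on Fin n whose natural action on Fin n is transitive. If G contains a transposition and G contains a cycle of length n − 1 (a permutation that is a cycle whose support has exactly n − 1 elements), then G is the whole symmetric group on Fin n. -/
import Mathlib


open Equiv

/-- A transitive subgroup of `S_n` (for `n ≥ 3`) containing a transposition and an
`(n-1)`-cycle is the whole symmetric group. -/
theorem eq_top_of_transitive_of_isSwap_of_cycle (n : ℕ) (hn : 3 ≤ n)
    (G : Subgroup (Equiv.Perm (Fin n)))
    (htrans : ∀ x y : Fin n, ∃ g ∈ G, g x = y)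
    (hswap : ∃ σ ∈ G, σ.IsSwap)
    (hcycle : ∃ τ ∈ G, τ.IsCycle ∧ τ.support.card = n - 1) :
    G = ⊤ := by
  obtain ⟨τ, hτG, hτc, hτcard⟩ := hcycle
  -- find the unique fixed point `a` of `τ`
  have hlt : τ.support.card < Fintype.card (Fin n) := by
    rw [hτcard, Fintype.card_fin]; omega
  obtain ⟨a, ha⟩ : ∃ a : Fin n, a ∉ τ.support := by
    by_contra h
    push_neg at h
    have : τ.support = Finset.univ := Finset.eq_univ_iff_forall.2 h
    rw [this, Finset.card_univ] at hlt
    exact lt_irrefl _ hlt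
  -- every `c ≠ a` is in the support of `τ`
  have hmem : ∀ c : Fin n, c ≠ a → c ∈ τ.support := by
    intro c hc
    by_contra hcs
    have hcompl : τ.supportᶜ.card = 1 := by
      rw [Finset.card_compl, hτcard, Fintype.card_fin]; omega
    obtain ⟨x, hx⟩ := Finset.card_eq_one.1 hcompl
    have h1 : a ∈ τ.supportᶜ := Finset.mem_compl.2 ha
    have h2 : c ∈ τ.supportᶜ := Finset.mem_compl.2 hcs
    rw [hx, Finset.mem_singleton] at h1 h2
    exact hc (h2.trans h1.symm)
  have hτa : τ a = a := by
    by_contra h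
    exact ha (Perm.mem_support.2 h)
  -- get a transposition `swap a b ∈ G`
  obtain ⟨σ, hσG, x, y, hxy, rfl⟩ := hswap
  obtain ⟨g, hgG, hg⟩ := htrans x a
  have hswapab : swap a (g y) ∈ G := by
    have : g * swap x y * g⁻¹ ∈ G := mul_mem (mul_mem hgG hσG) (inv_mem hgG)
    rwa [← swap_apply_apply, hg] at this
  have hba : g y ≠ a := by
    rw [← hg]
    exact fun h => hxy (g.injective h).symm
  -- all transpositions through `a` lie in `G`
  have key : ∀ c : Fin n, c ≠ a → swap a c ∈ G := by
    intro c hc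
    have hb : τ (g y) ≠ g y := Perm.mem_support.1 (hmem _ hba)
    have hcs : τ c ≠ c := Perm.mem_support.1 (hmem _ hc)
    obtain ⟨i, hi⟩ := hτc.exists_zpow_eq hb hcs
    have hpow : (τ ^ i) ∈ G := zpow_mem hτG i
    have hfix : (τ ^ i) a = a :=
      Perm.zpow_apply_eq_self_of_apply_eq_self hτa i
    have : (τ ^ i) * swap a (g y) * (τ ^ i)⁻¹ ∈ G :=
      mul_mem (mul_mem hpow hswapab) (inv_mem hpow)
    rwa [← swap_apply_apply, hfix, hi] at this
  -- every swap lies in `G`, hence `G = ⊤`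
  have hanySwap : ∀ u v : Fin n, u ≠ v → swap u v ∈ G := by
    intro u v huv
    rcases eq_or_ne u a with rfl | hu
    · exact key v (Ne.symm huv)
    rcases eq_or_ne v a with rfl | hv
    · rw [swap_comm]; exact key u hu
    · have h3 : swap a u * swap v a * swap a u = swap u v :=
        swap_mul_swap_mul_swap hv (Ne.symm huv)
      have h2 : swap a u * swap v a * (swap a u)⁻¹ ∈ G := by
        refine mul_mem (mul_mem (key u hu) ?_) (inv_mem (key u hu))
        rw [swap_comm]; exact key v hv
      rw [swap_inv, h3] at h2
      exact h2
  rw [eq_top_iff]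
  intro π _
  refine Perm.swap_induction_on π (one_mem G) ?_
  exact fun f u v huv hf => mul_mem (hanySwap u v huv) hf
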